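/- arXiv:1503.03842 — 3 statements merged into one kernel-verified Lean document; each statement's English description precedes it below -/
import Mathlib

section
/- Let a, b, c, d be integers with a ≤ c and b ≤ d, let m ≥ 1, and let S_i = (x_i, y_i) ∈ ℤ², i = 1, ..., m, be lattice points with a ≤ x_i ≤ c and b ≤ y_i ≤ d for all i. Then every lattice path P from (a,b) to (c,d) which stays weakly south-east of S_i for every i = 1, ..., m satisfies NE(P) ≤ min{c − a, d − b, c − b − max{x_i − y_i : 1 ≤ i ≤ m}}. -/
/-- A lattice path from `A` to `B`: a list of points of `ℤ × ℤ` whose consecutive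
differences are the unit steps `(1,0)` or `(0,1)`, starting at `A` and ending at `B`. -/
def IsLatticePathFrom (P : List (ℤ × ℤ)) (A B : ℤ × ℤ) : Prop :=
  P.Chain' (fun p q => q = (p.1 + 1, p.2) ∨ q = (p.1, p.2 + 1)) ∧
    P.head? = some A ∧ P.getLast? = some B

/-- The list of NE-turns of a lattice path: the points of the path that are the end
point of a vertical step and at the same time the starting point of a horizontal step. -/
def NETurns : List (ℤ × ℤ) → List (ℤ × ℤ)
  | p :: q :: r :: rest =>
      (if q = (p.1, p.2 + 1) ∧ r = (q.1 + 1, q.2) then [q] else []) ++ NETurns (q :: r :: rest)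
  | _ => []

/-- `(x,y)` lies weakly south-east of `S` if `x ≥ S.1` or `y ≤ S.2`. -/
def WeaklySE (p S : ℤ × ℤ) : Prop := S.1 ≤ p.1 ∨ p.2 ≤ S.2

/-- `(x,y)` lies weakly north-west of `T` if `x ≤ T.1` or `y ≥ T.2`. -/
def WeaklyNW (p T : ℤ × ℤ) : Prop := p.1 ≤ T.1 ∨ T.2 ≤ p.2

/-- A path stays weakly south-east of `S` if every point on it does. -/
def StaysSE (P : List (ℤ × ℤ)) (S : ℤ × ℤ) : Prop := ∀ p ∈ P, WeaklySE p S

/-- A path stays weakly north-west of `T` if every point on it does. -/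
def StaysNW (P : List (ℤ × ℤ)) (T : ℤ × ℤ) : Prop := ∀ p ∈ P, WeaklyNW p T

/-- A family of lattice paths is non-intersecting if no two of its members share a point. -/
def NonIntersecting {n : ℕ} (F : Fin n → List (ℤ × ℤ)) : Prop :=
  ∀ i j, i ≠ j → ∀ p, p ∈ F i → p ∉ F j

/-- The unit-step relation of lattice paths. -/
abbrev Step (p q : ℤ × ℤ) : Prop := q = (p.1 + 1, p.2) ∨ q = (p.1, p.2 + 1)

lemma step_le {p q : ℤ × ℤ} (h : Step p q) : p.1 ≤ q.1 ∧ p.2 ≤ q.2 := by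
  rcases h with h | h <;> subst h <;> simp

lemma neturns_mem : ∀ (P : List (ℤ × ℤ)), ∀ t ∈ NETurns P, t ∈ P
  | p :: q :: r :: rest => by
    intro t ht
    simp only [NETurns, List.mem_append] at ht
    rcases ht with h | h
    · split_ifs at h with hc
      · simp at h; subst h; simp
      · simp at h
    · have := neturns_mem (q :: r :: rest) t h
      simp only [List.mem_cons] at this ⊢; tauto
  | [] => by intro t ht; simp [NETurns] at ht
  | [p] => by intro t ht; simp [NETurns] at ht
  | [p, q] => by intro t ht; simp [NETurns] at ht

lemma path_mono : ∀ (l : List (ℤ × ℤ)) (p B : ℤ × ℤ), (p :: l).Chain' Step →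
    (p :: l).getLast? = some B → p.1 ≤ B.1 ∧ p.2 ≤ B.2
  | [], p, B, _, hB => by simp at hB; subst hB; exact ⟨le_refl _, le_refl _⟩
  | q :: l, p, B, hc, hB => by
    simp only [List.Chain'] at hc; rw [List.isChain_cons_cons] at hc
    have h1 := step_le hc.1
    have h2 := path_mono l q B hc.2 (by rw [← hB]; rfl)
    exact ⟨h1.1.trans h2.1, h1.2.trans h2.2⟩

lemma neturns_lb : ∀ (l : List (ℤ × ℤ)) (p : ℤ × ℤ), (p :: l).Chain' Step →
    ∀ t ∈ NETurns (p :: l), p.1 ≤ t.1 ∧ p.2 < t.2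
  | q :: r :: rest, p, hc, t, ht => by
    simp only [List.Chain'] at hc; rw [List.isChain_cons_cons] at hc
    have hpq := step_le hc.1
    simp only [NETurns, List.mem_append] at ht
    rcases ht with h | h
    · split_ifs at h with hcnd
      · simp at h; subst h
        rw [hcnd.1]; simp
      · simp at h
    · have := neturns_lb (r :: rest) q hc.2 t h
      exact ⟨hpq.1.trans this.1, lt_of_le_of_lt hpq.2 this.2⟩
  | [], p, _, t, ht => by simp [NETurns] at ht
  | [q], p, _, t, ht => by simp [NETurns] at ht

lemma neturns_ub : ∀ (l : List (ℤ × ℤ)) (p B : ℤ × ℤ), (p :: l).Chain' Step →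
    (p :: l).getLast? = some B → ∀ t ∈ NETurns (p :: l), t.1 < B.1 ∧ t.2 ≤ B.2
  | q :: r :: rest, p, B, hc, hB, t, ht => by
    simp only [List.Chain'] at hc; rw [List.isChain_cons_cons] at hc
    simp only [NETurns, List.mem_append] at ht
    have hB' : (q :: r :: rest).getLast? = some B := by rw [← hB]; rfl
    rcases ht with h | h
    · split_ifs at h with hcnd
      · simp at h; subst h
        have hc2 := hc.2
        rw [List.isChain_cons_cons] at hc2
        have hmono := path_mono rest r B hc2.2 (by rw [← hB']; rfl)
        rw [hcnd.2] at hmono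
        exact ⟨by omega, by omega⟩
      · simp at h
    · exact neturns_ub (r :: rest) q B hc.2 hB' t h
  | [], p, B, _, _, t, ht => by simp [NETurns] at ht
  | [q], p, B, _, _, t, ht => by simp [NETurns] at ht

lemma neturns_skip (q r : ℤ × ℤ) (rest : List (ℤ × ℤ)) (h : r.1 ≠ q.1) :
    NETurns (q :: r :: rest) = NETurns (r :: rest) := by
  match rest with
  | [] => rfl
  | s :: rest' =>
    simp only [NETurns]
    rw [if_neg, List.nil_append]
    rintro ⟨h1, -⟩
    apply h; rw [h1]

lemma neturns_chain : ∀ (P : List (ℤ × ℤ)), P.Chain' Step →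
    (NETurns P).Chain' (fun t t' => t.1 < t'.1 ∧ t.2 < t'.2)
  | p :: q :: r :: rest, hc => by
    have hc' := hc
    simp only [List.Chain'] at hc'; rw [List.isChain_cons_cons] at hc'
    have htail := neturns_chain (q :: r :: rest) hc'.2
    simp only [NETurns]
    split_ifs with hcnd
    · simp only [List.Chain', List.singleton_append, List.isChain_cons]
      have hc2 := hc'.2
      rw [List.isChain_cons_cons] at hc2
      have hskip : NETurns (q :: r :: rest) = NETurns (r :: rest) := by
        apply neturns_skip
        rw [hcnd.2]; simp
      constructor
      · intro b hb
        have hbmem : b ∈ NETurns (q :: r :: rest) := List.mem_of_mem_head? hb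
        rw [hskip] at hbmem
        have := neturns_lb rest r hc2.2 b hbmem
        rw [hcnd.2] at this
        exact ⟨by omega, by omega⟩
      · exact htail
    · rw [List.nil_append]; exact htail
  | [], _ => by simp [NETurns, List.Chain']
  | [p], _ => by simp [NETurns, List.Chain']
  | [p, q], _ => by simp [NETurns, List.Chain']

lemma count_bound (l : List (ℤ × ℤ)) (g : ℤ × ℤ → ℤ) (lo hi : ℤ) (hlohi : lo ≤ hi + 1)
    (hp : l.Pairwise fun t t' => g t < g t')
    (hb : ∀ t ∈ l, lo ≤ g t ∧ g t ≤ hi) : (l.length : ℤ) ≤ hi + 1 - lo := by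
  have hnd : (l.map g).Nodup := (List.pairwise_map.mpr hp).imp ne_of_lt
  have hsub : (l.map g).toFinset ⊆ Finset.Icc lo hi := by
    intro z hz
    rw [List.mem_toFinset, List.mem_map] at hz
    obtain ⟨t, ht, rfl⟩ := hz
    exact Finset.mem_Icc.mpr (hb t ht)
  have hcard := Finset.card_le_card hsub
  rw [List.toFinset_card_of_nodup hnd, List.length_map, Int.card_Icc] at hcard
  have := Int.toNat_of_nonneg (by omega : (0:ℤ) ≤ hi + 1 - lo)
  omega

theorem lemma1_upper_bound (a b c d : ℤ) (hac : a ≤ c) (hbd : b ≤ d)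
    (m : ℕ) (hm : 1 ≤ m) (x y : Fin m → ℤ)
    (hx : ∀ i, a ≤ x i ∧ x i ≤ c) (hy : ∀ i, b ≤ y i ∧ y i ≤ d)
    (P : List (ℤ × ℤ)) (hP : IsLatticePathFrom P (a, b) (c, d))
    (hSE : ∀ i, StaysSE P (x i, y i)) :
    ((NETurns P).length : ℤ) ≤
      min (c - a) (min (d - b) (c - b - sSup (Set.range fun i => x i - y i))) := by
  obtain ⟨hchain, hhead, hlast⟩ := hP
  obtain ⟨l, rfl⟩ : ∃ l, P = (a, b) :: l := by
    cases P with
    | nil => simp at hhead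
    | cons p l => simp at hhead; exact ⟨l, by rw [hhead]⟩
  set P := ((a, b) : ℤ × ℤ) :: l with hPdef
  have hch := neturns_chain P hchain
  haveI : IsTrans (ℤ × ℤ) (fun t t' => t.1 < t'.1 ∧ t.2 < t'.2) :=
    ⟨fun a b c h1 h2 => ⟨h1.1.trans h2.1, h1.2.trans h2.2⟩⟩
  have hpw := List.isChain_iff_pairwise.mp hch
  have hlb := neturns_lb l (a, b) hchain
  have hub := neturns_ub l (a, b) (c, d) hchain hlast
  have h1 : ((NETurns P).length : ℤ) ≤ c - a := by
    have := count_bound (NETurns P) (fun t => t.1) a (c - 1) (by omega)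
      (hpw.imp fun h => h.1)
      (fun t ht => ⟨(hlb t ht).1, by have := (hub t ht).1; simp at this ⊢; omega⟩)
    omega
  have h2 : ((NETurns P).length : ℤ) ≤ d - b := by
    have := count_bound (NETurns P) (fun t => t.2) (b + 1) d (by omega)
      (hpw.imp fun h => h.2)
      (fun t ht => ⟨by have := (hlb t ht).2; simp at this ⊢; omega,
        by have := (hub t ht).2; simp at this ⊢; omega⟩)
    omega
  haveI : Nonempty (Fin m) := ⟨⟨0, hm⟩⟩
  obtain ⟨i0, hi0⟩ : sSup (Set.range fun i => x i - y i) ∈ Set.range (fun i => x i - y i) :=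
    Set.Nonempty.csSup_mem (Set.range_nonempty _) (Set.finite_range _)
  have h3 : ((NETurns P).length : ℤ) ≤ c - b - (x i0 - y i0) := by
    have hse : ∀ t ∈ NETurns P, x i0 ≤ t.1 ∨ t.2 ≤ y i0 :=
      fun t ht => hSE i0 t (neturns_mem P t ht)
    have hx0 := hx i0
    have hy0 := hy i0
    have := count_bound (NETurns P)
      (fun t => if t.2 ≤ y i0 then t.2 - b - 1 else (y i0 - b) + (t.1 - x i0))
      0 ((y i0 - b) + (c - 1 - x i0)) (by omega)
      (hpw.imp_of_mem (fun {t t'} ht ht' h => by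
        have hse' := hse t' ht'
        by_cases h1 : t.2 ≤ y i0 <;> by_cases h2 : t'.2 ≤ y i0 <;>
          simp only [if_pos, if_neg, h1, h2, if_true, if_false] <;> omega))
      (fun t ht => by
        have hse' := hse t ht
        have hl := hlb t ht
        have hu := hub t ht
        simp only at hl hu
        by_cases h1 : t.2 ≤ y i0 <;>
          simp only [h1, if_true, if_false] <;> omega)
    omega
  have hi0' : x i0 - y i0 = sSup (Set.range fun i => x i - y i) := hi0
  rw [← hi0']
  simp only [le_min_iff]
  exact ⟨h1, h2, h3⟩
end

section
/- Let a, b, c, d be integers with a ≤ c and b ≤ d, let m ≥ 1, and let S_i = (x_i, y_i) ∈ ℤ², i = 1, ..., m, be lattice points with a ≤ x_i ≤ c and b ≤ y_i ≤ d for all i. Then there exists a lattice path P from (a,b) to (c,d) which stays weakly south-east of S_i for every i = 1, ..., m and satisfies NE(P) = min{c − a, d − b, c − b − max{x_i − y_i : 1 ≤ i ≤ m}}. -/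
def npath : ℤ × ℤ → ℕ → List (ℤ × ℤ)
  | p, 0 => [p]
  | p, n+1 => p :: npath (p.1, p.2+1) n

def spath : ℤ × ℤ → ℕ → ℕ → List (ℤ × ℤ)
  | p, 0, n => npath p n
  | p, k+1, n => p :: (p.1, p.2+1) :: spath (p.1+1, p.2+1) k n

def fpath : ℤ × ℤ → ℕ → ℕ → ℕ → List (ℤ × ℤ)
  | p, 0, k, n => spath p k n
  | p, e+1, k, n => p :: fpath (p.1+1, p.2) e k n

lemma npath_head? (p : ℤ × ℤ) (n : ℕ) : (npath p n).head? = some p := by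
  cases n <;> rfl

lemma spath_head? (p : ℤ × ℤ) (k n : ℕ) : (spath p k n).head? = some p := by
  cases k
  · exact npath_head? p n
  · rfl

lemma fpath_head? (p : ℤ × ℤ) (e k n : ℕ) : (fpath p e k n).head? = some p := by
  cases e
  · exact spath_head? p k n
  · rfl

lemma npath_getLast? (p : ℤ × ℤ) (n : ℕ) :
    (npath p n).getLast? = some (p.1, p.2 + n) := by
  induction n generalizing p with
  | zero => simp [npath]
  | succ n ih =>
    rw [npath]
    obtain ⟨q, t, ht⟩ : ∃ q t, npath (p.1, p.2+1) n = q :: t := by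
      cases n <;> exact ⟨_, _, rfl⟩
    rw [ht, List.getLast?_cons_cons, ← ht, ih]
    simp only [Option.some.injEq, Prod.mk.injEq]
    refine ⟨trivial, ?_⟩
    push_cast
    ring

lemma spath_getLast? (p : ℤ × ℤ) (k n : ℕ) :
    (spath p k n).getLast? = some (p.1 + k, p.2 + k + n) := by
  induction k generalizing p with
  | zero => simpa [spath] using npath_getLast? p n
  | succ k ih =>
    rw [spath]
    obtain ⟨q, t, ht⟩ : ∃ q t, spath (p.1+1, p.2+1) k n = q :: t := by
      cases k
      · cases n <;> exact ⟨_, _, rfl⟩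
      · exact ⟨_, _, rfl⟩
    rw [ht, List.getLast?_cons_cons, List.getLast?_cons_cons, ← ht, ih]
    simp only [Option.some.injEq, Prod.mk.injEq]
    constructor <;> push_cast <;> ring

lemma fpath_getLast? (p : ℤ × ℤ) (e k n : ℕ) :
    (fpath p e k n).getLast? = some (p.1 + e + k, p.2 + k + n) := by
  induction e generalizing p with
  | zero => simpa [fpath] using spath_getLast? p k n
  | succ e ih =>
    rw [fpath]
    obtain ⟨q, t, ht⟩ : ∃ q t, fpath (p.1+1, p.2) e k n = q :: t := by
      cases e
      · cases k
        · cases n <;> exact ⟨_, _, rfl⟩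
        · exact ⟨_, _, rfl⟩
      · exact ⟨_, _, rfl⟩
    rw [ht, List.getLast?_cons_cons, ← ht, ih]
    simp only [Option.some.injEq, Prod.mk.injEq]
    constructor <;> push_cast <;> ring

lemma npath_chain (p : ℤ × ℤ) (n : ℕ) : (npath p n).Chain' Step := by
  induction n generalizing p with
  | zero => exact List.isChain_singleton p
  | succ n ih =>
    rw [npath]
    refine List.isChain_cons.2 ⟨?_, ih _⟩
    intro q hq
    rw [npath_head?, Option.mem_def, Option.some.injEq] at hq
    exact Or.inr hq.symm

lemma spath_chain (p : ℤ × ℤ) (k n : ℕ) : (spath p k n).Chain' Step := by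
  induction k generalizing p with
  | zero => exact npath_chain p n
  | succ k ih =>
    rw [spath]
    refine List.isChain_cons.2 ⟨?_, List.isChain_cons.2 ⟨?_, ih _⟩⟩
    · intro q hq
      simp only [List.head?_cons, Option.mem_def, Option.some.injEq] at hq
      exact Or.inr hq.symm
    · intro q hq
      rw [spath_head?, Option.mem_def, Option.some.injEq] at hq
      exact Or.inl hq.symm

lemma fpath_chain (p : ℤ × ℤ) (e k n : ℕ) : (fpath p e k n).Chain' Step := by
  induction e generalizing p with
  | zero => exact spath_chain p k n
  | succ e ih =>
    rw [fpath]
    refine List.isChain_cons.2 ⟨?_, ih _⟩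
    intro q hq
    rw [fpath_head?, Option.mem_def, Option.some.injEq] at hq
    exact Or.inl hq.symm

lemma neturns_cons_E (p : ℤ × ℤ) (L : List (ℤ × ℤ))
    (h : L.head? = some (p.1 + 1, p.2)) : NETurns (p :: L) = NETurns L := by
  match L with
  | [] => simp at h
  | [r] => rfl
  | r :: s :: rest =>
    simp only [List.head?_cons, Option.some.injEq] at h
    rw [NETurns]
    have : ¬(r = (p.1, p.2 + 1) ∧ s = (r.1 + 1, r.2)) := by
      rintro ⟨h1, -⟩
      rw [h] at h1
      simp at h1
    rw [if_neg this, List.nil_append]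

lemma neturns_npath (p : ℤ × ℤ) (n : ℕ) : NETurns (npath p n) = [] := by
  induction n using Nat.strong_induction_on generalizing p with
  | _ n ih =>
    match n with
    | 0 => rfl
    | 1 => rfl
    | (n+2) =>
      rw [npath, npath]
      obtain ⟨r, t, ht⟩ : ∃ r t, npath ((p.1, p.2+1).1, (p.1, p.2+1).2+1) n = r :: t := by
        cases n <;> exact ⟨_, _, rfl⟩
      rw [ht, NETurns]
      have : ¬((p.1, p.2+1) = (p.1, p.2 + 1) ∧ r = ((p.1, p.2+1).1 + 1, (p.1, p.2+1).2)) := by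
        rintro ⟨-, h2⟩
        have := npath_head? ((p.1, p.2+1).1, (p.1, p.2+1).2+1) n
        rw [ht] at this
        simp only [List.head?_cons, Option.some.injEq] at this
        rw [this] at h2
        simp at h2
      rw [if_neg this, List.nil_append, ← ht]
      have := ih (n+1) (by omega) (p.1, p.2+1)
      rw [npath] at this
      exact this

lemma neturns_spath_length (p : ℤ × ℤ) (k n : ℕ) :
    (NETurns (spath p k n)).length = k := by
  induction k generalizing p with
  | zero => rw [spath, neturns_npath]; rfl
  | succ k ih =>
    rw [spath]
    obtain ⟨r, t, ht⟩ : ∃ r t, spath (p.1+1, p.2+1) k n = r :: t := by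
      cases k
      · cases n <;> exact ⟨_, _, rfl⟩
      · exact ⟨_, _, rfl⟩
    have hr : r = (p.1+1, p.2+1) := by
      have := spath_head? (p.1+1, p.2+1) k n
      rw [ht] at this
      simpa using this
    rw [ht, NETurns, if_pos (by rw [hr]; exact ⟨rfl, rfl⟩), ← ht]
    have h2 : NETurns ((p.1, p.2+1) :: spath (p.1+1, p.2+1) k n)
        = NETurns (spath (p.1+1, p.2+1) k n) := by
      apply neturns_cons_E
      exact spath_head? _ k n
    rw [List.singleton_append, List.length_cons, h2, ih]

lemma neturns_fpath_length (p : ℤ × ℤ) (e k n : ℕ) :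
    (NETurns (fpath p e k n)).length = k := by
  induction e generalizing p with
  | zero => exact neturns_spath_length p k n
  | succ e ih =>
    rw [fpath, neturns_cons_E _ _ (fpath_head? _ e k n), ih]

lemma mem_npath {q p : ℤ × ℤ} {n : ℕ} (h : q ∈ npath p n) : q.1 = p.1 := by
  induction n generalizing p with
  | zero => rw [npath] at h; simp at h; rw [h]
  | succ n ih =>
    rw [npath] at h
    rcases List.mem_cons.1 h with h | h
    · rw [h]
    · rw [ih h]

lemma mem_spath {q p : ℤ × ℤ} {k n : ℕ} (h : q ∈ spath p k n) :
    p.1 - p.2 - 1 ≤ q.1 - q.2 ∨ q.1 = p.1 + k := by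
  induction k generalizing p with
  | zero =>
    right
    rw [mem_npath h]
    simp
  | succ k ih =>
    rw [spath] at h
    rcases List.mem_cons.1 h with h | h
    · left; rw [h]; omega
    rcases List.mem_cons.1 h with h | h
    · left; rw [h]; simp; omega
    · rcases ih h with h | h
      · left; simp at h; omega
      · right; rw [h]; simp; push_cast; ring

lemma mem_fpath {q p : ℤ × ℤ} {e k n : ℕ} (h : q ∈ fpath p e k n) :
    q.2 = p.2 ∨ q ∈ spath (p.1 + e, p.2) k n := by
  induction e generalizing p with
  | zero => right; simpa [fpath] using h
  | succ e ih =>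
    rw [fpath] at h
    rcases List.mem_cons.1 h with h | h
    · left; rw [h]
    · rcases ih h with h | h
      · left; exact h
      · right
        have : ((p.1+1 : ℤ) + (e:ℤ), p.2) = (p.1 + ((e:ℕ)+1 : ℕ), p.2) := by
          simp; push_cast; ring
        rwa [this] at h

theorem lemma1_existence (a b c d : ℤ) (hac : a ≤ c) (hbd : b ≤ d)
    (m : ℕ) (hm : 1 ≤ m) (x y : Fin m → ℤ)
    (hx : ∀ i, a ≤ x i ∧ x i ≤ c) (hy : ∀ i, b ≤ y i ∧ y i ≤ d) :
    ∃ P : List (ℤ × ℤ), IsLatticePathFrom P (a, b) (c, d) ∧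
      (∀ i, StaysSE P (x i, y i)) ∧
      ((NETurns P).length : ℤ) =
        min (c - a) (min (d - b) (c - b - sSup (Set.range fun i => x i - y i))) := by
  show ∃ P : List (ℤ × ℤ), (P.Chain' Step ∧
      P.head? = some (a,b) ∧ P.getLast? = some (c,d)) ∧
      (∀ i, ∀ p ∈ P, ((x i, y i).1 ≤ p.1 ∨ p.2 ≤ (x i, y i).2)) ∧ _

  have hne : Nonempty (Fin m) := ⟨⟨0, hm⟩⟩
  set M := sSup (Set.range fun i => x i - y i) with hMdef
  have hM1 : ∀ i, x i - y i ≤ M :=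
    fun i => le_csSup (Set.finite_range _).bddAbove ⟨i, rfl⟩
  have hMc : M ≤ c - b := by
    apply csSup_le (Set.range_nonempty _)
    rintro _ ⟨i, rfl⟩
    show x i - y i ≤ c - b
    have := (hx i).2; have := (hy i).1; omega
  set k : ℤ := min (c - a) (min (d - b) (c - b - M)) with hkdef
  have hk0 : 0 ≤ k := by simp only [hkdef, le_min_iff]; omega
  have hkca : k ≤ c - a := min_le_left _ _
  have hkdb : k ≤ d - b := le_trans (min_le_right _ _) (min_le_left _ _)
  have hkM : k ≤ c - b - M := le_trans (min_le_right _ _) (min_le_right _ _)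
  set E : ℕ := (c - a - k).toNat with hEdef
  set K : ℕ := k.toNat with hKdef
  set N : ℕ := (d - b - k).toNat with hNdef
  have hE : (E : ℤ) = c - a - k := Int.toNat_of_nonneg (by omega)
  have hK : (K : ℤ) = k := Int.toNat_of_nonneg hk0
  have hN : (N : ℤ) = d - b - k := Int.toNat_of_nonneg (by omega)
  refine ⟨fpath (a, b) E K N, ⟨fpath_chain _ _ _ _, fpath_head? _ _ _ _, ?_⟩, ?_, ?_⟩
  · rw [fpath_getLast?]
    simp only [Option.some.injEq, Prod.mk.injEq]
    constructor <;> omega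
  · intro i q hq
    rcases mem_fpath hq with h | h
    · right; simp only [h]; exact (hy i).1
    · rcases mem_spath h with h | h
      · -- diff bound
        simp only at h
        have h1 : x i - y i ≤ M := hM1 i
        have h2 := (hx i).2
        omega
      · left
        simp only at h
        have := (hx i).2
        omega
  · rw [neturns_fpath_length]; exact hK
end

section
/- Let a, b, c, d be integers with a ≤ c and b ≤ d, let m ≥ 0, and let S_i = (x_i, y_i) ∈ ℤ², i = 1, ..., m, be lattice points with a ≤ x_i ≤ c and b ≤ y_i ≤ d for all i. Set S_0 = (x_0, y_0) = (a,b) and S_{m+1} = (x_{m+1}, y_{m+1}) = (c,d). Then the maximum of NE(P) over all lattice paths P from (a,b) to (c,d) which stay weakly south-east of S_i for every i = 1, ..., m equals c − b − max{x_i − y_i : 0 ≤ i ≤ m+1}. -/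
/-! ### Auxiliary machinery -/

namespace Remark2Aux

lemma List.chain'_cons {α : Type*} {R : α → α → Prop} {x y : α} {l : List α} :
    List.Chain' R (x :: y :: l) ↔ R x y ∧ List.Chain' R (y :: l) := List.isChain_cons_cons

lemma List.chain'_cons' {α : Type*} {R : α → α → Prop} {x : α} {l : List α} :
    List.Chain' R (x :: l) ↔ (∀ y ∈ l.head?, R x y) ∧ List.Chain' R l := List.isChain_cons

lemma List.chain'_iff_get {α : Type*} {R : α → α → Prop} {l : List α} :
    List.Chain' R l ↔ ∀ (i : ℕ) (h : i < l.length - 1),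
      R l[i] (l[i + 1]'(by omega)) := by
  unfold List.Chain'
  rw [List.isChain_iff_getElem]
  exact ⟨fun h i hi => h i (by omega), fun h i hi => h i (by omega)⟩

lemma List.chain'_nil' {α : Type*} {R : α → α → Prop} : List.Chain' R [] := List.isChain_nil

lemma List.chain'_singleton' {α : Type*} {R : α → α → Prop} (a : α) : List.Chain' R [a] :=
  List.isChain_singleton a

/-- One unit step: east if `mv = true`, north if `mv = false`. -/
def step (p : ℤ × ℤ) (mv : Bool) : ℤ × ℤ :=
  if mv then (p.1 + 1, p.2) else (p.1, p.2 + 1)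

/-- The list of points visited starting at `p` and performing the moves. -/
def seg : ℤ × ℤ → List Bool → List (ℤ × ℤ)
  | p, [] => [p]
  | p, mv :: rest => p :: seg (step p mv) rest

/-- The final point after performing the moves from `p`. -/
def endpt : ℤ × ℤ → List Bool → ℤ × ℤ
  | p, [] => p
  | p, mv :: rest => endpt (step p mv) rest

/-- Number of occurrences of a north step immediately followed by an east step. -/
def countNE : List Bool → ℕ
  | false :: true :: rest => countNE (true :: rest) + 1
  | _ :: rest => countNE rest
  | [] => 0

/-- `k` repetitions of the moves north, east. -/
def zig : ℕ → List Bool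
  | 0 => []
  | n + 1 => false :: true :: zig n

lemma countNE_true_cons (l : List Bool) : countNE (true :: l) = countNE l := by
  cases l with
  | nil => rfl
  | cons a t => rfl

lemma countNE_false_true (l : List Bool) :
    countNE (false :: true :: l) = countNE (true :: l) + 1 := rfl

lemma countNE_false_false (l : List Bool) :
    countNE (false :: false :: l) = countNE (false :: l) := rfl

lemma countNE_replicate_true_append (n : ℕ) (l : List Bool) :
    countNE (List.replicate n true ++ l) = countNE l := by
  induction n with
  | zero => rfl
  | succ n ih => simpa [List.replicate_succ, countNE_true_cons] using ih

lemma countNE_replicate_false (n : ℕ) : countNE (List.replicate n false) = 0 := by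
  induction n with
  | zero => rfl
  | succ n ih =>
    cases n with
    | zero => rfl
    | succ k => simpa [List.replicate_succ, countNE_false_false] using ih

lemma countNE_zig_append (k : ℕ) (l : List Bool) :
    countNE (zig k ++ l) = k + countNE l := by
  induction k with
  | zero => simp [zig]
  | succ k ih =>
    simp only [zig, List.cons_append, countNE_false_true, countNE_true_cons, ih]
    omega

lemma seg_ne_nil (p : ℤ × ℤ) (l : List Bool) : seg p l ≠ [] := by
  cases l <;> simp [seg]

lemma seg_head (p : ℤ × ℤ) (l : List Bool) : (seg p l).head? = some p := by
  cases l <;> simp [seg]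

lemma seg_exists_cons (p : ℤ × ℤ) (l : List Bool) : ∃ t, seg p l = p :: t := by
  cases l with
  | nil => exact ⟨[], rfl⟩
  | cons m r => exact ⟨_, rfl⟩

lemma seg_chain (p : ℤ × ℤ) (l : List Bool) :
    (seg p l).Chain' (fun p q => q = (p.1 + 1, p.2) ∨ q = (p.1, p.2 + 1)) := by
  induction l generalizing p with
  | nil => exact List.chain'_singleton' _
  | cons m r ih =>
    obtain ⟨t, ht⟩ := seg_exists_cons (step p m) r
    rw [seg, ht, List.chain'_cons]
    refine ⟨?_, ht ▸ ih (step p m)⟩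
    cases m
    · right; rfl
    · left; rfl

lemma seg_getLast (p : ℤ × ℤ) (l : List Bool) : (seg p l).getLast? = some (endpt p l) := by
  induction l generalizing p with
  | nil => rfl
  | cons m r ih =>
    rw [seg, endpt, List.getLast?_cons, ih]
    simp [seg_ne_nil]

lemma endpt_append (p : ℤ × ℤ) (l1 l2 : List Bool) :
    endpt p (l1 ++ l2) = endpt (endpt p l1) l2 := by
  induction l1 generalizing p with
  | nil => rfl
  | cons m r ih => rw [List.cons_append, endpt, endpt, ih]

lemma seg_append (p : ℤ × ℤ) (l1 l2 : List Bool) :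
    seg p (l1 ++ l2) = (seg p l1).dropLast ++ seg (endpt p l1) l2 := by
  induction l1 generalizing p with
  | nil => rfl
  | cons m r ih =>
    rw [List.cons_append, seg, seg, endpt, ih]
    obtain ⟨t, ht⟩ := seg_exists_cons (step p m) r
    rw [ht]
    simp

lemma endpt_replicate_true (p : ℤ × ℤ) (n : ℕ) :
    endpt p (List.replicate n true) = (p.1 + n, p.2) := by
  induction n generalizing p with
  | zero => simp [endpt]
  | succ n ih =>
    rw [List.replicate_succ, endpt, ih]
    simp [step]
    ring

lemma endpt_replicate_false (p : ℤ × ℤ) (n : ℕ) :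
    endpt p (List.replicate n false) = (p.1, p.2 + n) := by
  induction n generalizing p with
  | zero => simp [endpt]
  | succ n ih =>
    rw [List.replicate_succ, endpt, ih]
    simp [step]
    ring

lemma endpt_zig (p : ℤ × ℤ) (n : ℕ) :
    endpt p (zig n) = (p.1 + n, p.2 + n) := by
  induction n generalizing p with
  | zero => simp [zig, endpt]
  | succ n ih =>
    rw [zig, endpt, endpt, ih]
    simp [step]
    constructor <;> ring

lemma mem_seg_replicate_true (p q : ℤ × ℤ) (n : ℕ)
    (h : q ∈ seg p (List.replicate n true)) : q.2 = p.2 := by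
  induction n generalizing p with
  | zero => simp [seg] at h; simp [h]
  | succ n ih =>
    rw [List.replicate_succ, seg] at h
    rcases List.mem_cons.1 h with rfl | h
    · rfl
    · simpa [step] using ih _ h

lemma mem_seg_replicate_false (p q : ℤ × ℤ) (n : ℕ)
    (h : q ∈ seg p (List.replicate n false)) : q.1 = p.1 := by
  induction n generalizing p with
  | zero => simp [seg] at h; simp [h]
  | succ n ih =>
    rw [List.replicate_succ, seg] at h
    rcases List.mem_cons.1 h with rfl | h
    · rfl
    · simpa [step] using ih _ h

lemma mem_seg_zig (p q : ℤ × ℤ) (n : ℕ)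
    (h : q ∈ seg p (zig n)) : p.1 - p.2 - 1 ≤ q.1 - q.2 ∧ q.1 - q.2 ≤ p.1 - p.2 := by
  induction n generalizing p with
  | zero => simp [zig, seg] at h; simp [h]
  | succ n ih =>
    rw [zig, seg, seg] at h
    rcases List.mem_cons.1 h with rfl | h
    · omega
    rcases List.mem_cons.1 h with rfl | h
    · simp [step]; omega
    · have := ih (step (step p false) true) h
      simp [step] at this ⊢
      omega

lemma NETurns_cons3 (p q r : ℤ × ℤ) (rest : List (ℤ × ℤ)) :
    NETurns (p :: q :: r :: rest) =
      (if q = (p.1, p.2 + 1) ∧ r = (q.1 + 1, q.2) then [q] else []) ++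
        NETurns (q :: r :: rest) := rfl

lemma NETurns_seg (p : ℤ × ℤ) (l : List Bool) :
    (NETurns (seg p l)).length = countNE l := by
  induction l generalizing p with
  | nil => rfl
  | cons m1 r ih =>
    cases r with
    | nil => cases m1 <;> rfl
    | cons m2 r' =>
      obtain ⟨t, ht⟩ := seg_exists_cons (step (step p m1) m2) r'
      have hseg : seg p (m1 :: m2 :: r') = p :: step p m1 :: step (step p m1) m2 :: t := by
        rw [seg, seg, ht]
      have hseg2 : seg (step p m1) (m2 :: r') = step p m1 :: step (step p m1) m2 :: t := by
        rw [seg, ht]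
      rw [hseg, NETurns_cons3, List.length_append, ← hseg2, ih]
      cases m1 with
      | true =>
        have : ¬ (step p true = (p.1, p.2 + 1) ∧
            step (step p true) m2 = ((step p true).1 + 1, (step p true).2)) := by
          rintro ⟨h1, -⟩
          simp [step, Prod.ext_iff] at h1
        rw [if_neg this]
        cases m2 with
        | true => simp [countNE]
        | false => simp [countNE]
      | false =>
        cases m2 with
        | true =>
          rw [if_pos (by simp [step])]
          simp [countNE]
          omega
        | false =>
          have : ¬ (step p false = (p.1, p.2 + 1) ∧
              step (step p false) false = ((step p false).1 + 1, (step p false).2)) := by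
            rintro ⟨-, h2⟩
            simp [step, Prod.ext_iff] at h2
          rw [if_neg this]
          simp [countNE]

abbrev SRel (p q : ℤ × ℤ) : Prop := q = (p.1 + 1, p.2) ∨ q = (p.1, p.2 + 1)

lemma chain_head_le (P : List (ℤ × ℤ)) (hc : P.Chain' SRel) (p0 : ℤ × ℤ)
    (h0 : P.head? = some p0) : ∀ q ∈ P, p0.1 ≤ q.1 ∧ p0.2 ≤ q.2 := by
  induction P generalizing p0 with
  | nil => simp at h0
  | cons p t ih =>
    simp at h0
    subst h0
    intro q hq
    rcases List.mem_cons.1 hq with rfl | hq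
    · omega
    · cases t with
      | nil => simp at hq
      | cons p' t' =>
        rw [List.chain'_cons] at hc
        have h1 := ih hc.2 p' rfl q hq
        rcases hc.1 with h | h <;> rw [h] at h1 <;> constructor <;> omega

lemma chain_le_last (P : List (ℤ × ℤ)) (hc : P.Chain' SRel) (pN : ℤ × ℤ)
    (hN : P.getLast? = some pN) : ∀ q ∈ P, q.1 ≤ pN.1 ∧ q.2 ≤ pN.2 := by
  induction P with
  | nil => simp at hN
  | cons p t ih =>
    intro q hq
    cases t with
    | nil =>
      simp at hN hq
      subst hN; subst hq; omega
    | cons p' t' =>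
      rw [List.getLast?_cons_cons] at hN
      rw [List.chain'_cons] at hc
      rcases List.mem_cons.1 hq with rfl | hq
      · have h1 := ih hc.2 hN p' List.mem_cons_self
        rcases hc.1 with h | h <;> rw [h] at h1 <;> constructor <;> omega
      · exact ih hc.2 hN q hq

lemma NETurns_mem (P : List (ℤ × ℤ)) :
    ∀ t ∈ NETurns P, t ∈ P ∧ (t.1 + 1, t.2) ∈ P := by
  match P with
  | [] => simp [NETurns]
  | [p] => simp [NETurns]
  | [p, q] => simp [NETurns]
  | p :: q :: r :: rest =>
    intro t ht
    rw [NETurns_cons3, List.mem_append] at ht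
    rcases ht with ht | ht
    · split at ht
      · rename_i hcond
        simp at ht
        subst ht
        refine ⟨by simp, ?_⟩
        rw [← hcond.2]
        simp
      · simp at ht
    · have := NETurns_mem (q :: r :: rest) t ht
      exact ⟨List.mem_cons_of_mem _ this.1, List.mem_cons_of_mem _ this.2⟩

lemma NETurns_lb (P : List (ℤ × ℤ)) (hc : P.Chain' SRel) (p0 : ℤ × ℤ)
    (h0 : P.head? = some p0) : ∀ t ∈ NETurns P, p0.1 ≤ t.1 ∧ p0.2 + 1 ≤ t.2 := by
  match P with
  | [] => simp [NETurns]
  | [p] => simp [NETurns]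
  | [p, q] => simp [NETurns]
  | p :: q :: r :: rest =>
    simp at h0; subst h0
    intro t ht
    rw [List.chain'_cons] at hc
    rw [NETurns_cons3, List.mem_append] at ht
    rcases ht with ht | ht
    · split at ht
      · rename_i hcond
        simp at ht
        subst ht
        rw [hcond.1]
        omega
      · simp at ht
    · have h1 := NETurns_lb (q :: r :: rest) hc.2 q rfl t ht
      rcases hc.1 with h | h <;> rw [h] at h1 <;> omega

lemma NETurns_chain (P : List (ℤ × ℤ)) (hc : P.Chain' SRel) :
    (NETurns P).Chain' (fun u v => u.1 + 1 ≤ v.1 ∧ u.2 + 1 ≤ v.2) := by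
  match P with
  | [] => exact List.chain'_nil'
  | [p] => exact List.chain'_nil'
  | [p, q] => exact List.chain'_nil'
  | p :: q :: r :: rest =>
    rw [List.chain'_cons] at hc
    have ihtail := NETurns_chain (q :: r :: rest) hc.2
    rw [NETurns_cons3]
    split
    · rename_i hcond
      have heq : NETurns (q :: r :: rest) = NETurns (r :: rest) := by
        cases rest with
        | nil => rfl
        | cons s rest' =>
          rw [NETurns_cons3, if_neg ?_]
          · simp
          · rintro ⟨h1, -⟩
            rw [hcond.2] at h1
            simp [Prod.ext_iff] at h1
      rw [heq] at ihtail ⊢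
      rw [List.singleton_append]
      rw [List.chain'_cons']
      refine ⟨?_, ihtail⟩
      intro t ht
      have htmem : t ∈ NETurns (r :: rest) := List.mem_of_mem_head? ht
      rw [List.chain'_cons] at hc
      have := NETurns_lb (r :: rest) hc.2.2 r rfl t htmem
      rw [hcond.2] at this
      constructor <;> omega
    · simpa using ihtail

lemma quant (f : ℕ → ℤ) (n : ℕ) (h : ∀ i, i + 1 < n → f i + 1 ≤ f (i + 1)) :
    ∀ i j, i ≤ j → j < n → f i + ((j - i : ℕ) : ℤ) ≤ f j := by
  intro i j hij hj
  induction j with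
  | zero =>
    interval_cases i
    simp
  | succ j ihj =>
    rcases Nat.lt_or_ge i (j + 1) with hlt | hge
    · have h1 := ihj (by omega) (by omega)
      have h2 := h j (by omega)
      have : ((j + 1 - i : ℕ) : ℤ) = ((j - i : ℕ) : ℤ) + 1 := by omega
      omega
    · have : i = j + 1 := by omega
      subst this
      simp

lemma main_bound (a b c d : ℤ) (P : List (ℤ × ℤ)) (hc : P.Chain' SRel)
    (h0 : P.head? = some (a, b)) (hN : P.getLast? = some (c, d)) :
    ((NETurns P).length : ℤ) ≤ c - a ∧ ((NETurns P).length : ℤ) ≤ d - b ∧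
      ∀ X Y : ℤ, b ≤ Y → X ≤ c → (∀ p ∈ P, X ≤ p.1 ∨ p.2 ≤ Y) →
        ((NETurns P).length : ℤ) ≤ (c - X) + (Y - b) := by
  have hub := chain_le_last P hc (c, d) hN
  have hlb := chain_head_le P hc (a, b) h0
  have key : ∀ L : List (ℤ × ℤ),
      (∀ t ∈ L, t ∈ P ∧ (t.1 + 1, t.2) ∈ P) →
      (∀ t ∈ L, b + 1 ≤ t.2) →
      L.Chain' (fun u v => u.1 + 1 ≤ v.1 ∧ u.2 + 1 ≤ v.2) →
      (L.length : ℤ) ≤ c - a ∧ (L.length : ℤ) ≤ d - b ∧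
      ∀ X Y : ℤ, b ≤ Y → X ≤ c → (∀ p ∈ P, X ≤ p.1 ∨ p.2 ≤ Y) →
        (L.length : ℤ) ≤ (c - X) + (Y - b) := by
    intro L hmem hlbt hchain
    set n := L.length with hn
    rcases Nat.eq_zero_or_pos n with h0n | h0n
    · have h1 : a ≤ c ∧ b ≤ d := hub (a, b) (List.mem_of_mem_head? (by simpa using h0))
      rw [h0n]
      refine ⟨by omega, by omega, fun X Y hY hX _ => by omega⟩
    have hgetmem : ∀ j, j < n → L.getD j (0, 0) ∈ L := by
      intro j hj
      rw [List.getD_eq_getElem L (0, 0) (by omega : j < L.length)]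
      exact List.getElem_mem _
    have hfacts : ∀ j, j < n → a ≤ (L.getD j (0, 0)).1 ∧ (L.getD j (0, 0)).1 + 1 ≤ c ∧
        b + 1 ≤ (L.getD j (0, 0)).2 ∧ (L.getD j (0, 0)).2 ≤ d := by
      intro j hj
      have htL : L.getD j (0, 0) ∈ L := hgetmem j hj
      have hm := hmem _ htL
      have h1 : a ≤ (L.getD j (0, 0)).1 := (hlb _ hm.1).1
      have h2 : (L.getD j (0, 0)).2 ≤ d := (hub _ hm.1).2
      have h3 : (L.getD j (0, 0)).1 + 1 ≤ c := (hub _ hm.2).1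
      have h4 := hlbt _ htL
      exact ⟨h1, h3, h4, h2⟩
    rw [List.chain'_iff_get] at hchain
    have hstep : ∀ i, i + 1 < n → (L.getD i (0, 0)).1 + 1 ≤ (L.getD (i + 1) (0, 0)).1 ∧
        (L.getD i (0, 0)).2 + 1 ≤ (L.getD (i + 1) (0, 0)).2 := by
      intro i hi
      have h1 := hchain i (by omega)
      rw [List.getD_eq_getElem L (0, 0) (by omega : i < L.length),
          List.getD_eq_getElem L (0, 0) (by omega : i + 1 < L.length)]
      exact h1
    have hq1 := quant (fun j => (L.getD j (0, 0)).1) n (fun i hi => (hstep i hi).1)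
    have hq2 := quant (fun j => (L.getD j (0, 0)).2) n (fun i hi => (hstep i hi).2)
    beta_reduce at hq1 hq2
    have hf0 := hfacts 0 h0n
    have hflast := hfacts (n - 1) (by omega)
    have hq1' := hq1 0 (n - 1) (by omega) (by omega)
    have hq2' := hq2 0 (n - 1) (by omega) (by omega)
    simp only [Nat.sub_zero] at hq1' hq2'
    refine ⟨by omega, by omega, ?_⟩
    intro X Y hY hX hSE
    rcases le_or_gt (n : ℤ) (Y - b) with h | h
    · omega
    · set j := (Y - b).toNat with hj
      have hjn : (j : ℤ) = Y - b := Int.toNat_of_nonneg (by omega)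
      have hjlt : j < n := by omega
      have hfj := hfacts j hjlt
      have hq2j := hq2 0 j (by omega) hjlt
      simp only [Nat.sub_zero] at hq2j
      have hYlt : Y < (L.getD j (0, 0)).2 := by omega
      have hse := hSE _ (hmem _ (hgetmem j hjlt)).1
      have hXle : X ≤ (L.getD j (0, 0)).1 := by
        rcases hse with h' | h'
        · exact h'
        · omega
      have hq1j := hq1 j (n - 1) (by omega) (by omega)
      omega
  exact key (NETurns P) (NETurns_mem P)
    (fun t ht => (NETurns_lb P hc (a, b) h0 t ht).2) (NETurns_chain P hc)

end Remark2Aux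

open Remark2Aux

theorem remark2_maximum (a b c d : ℤ) (hac : a ≤ c) (hbd : b ≤ d)
    (m : ℕ) (x y : Fin m → ℤ)
    (hx : ∀ i, a ≤ x i ∧ x i ≤ c) (hy : ∀ i, b ≤ y i ∧ y i ≤ d) :
    IsGreatest
      {k : ℤ | ∃ P : List (ℤ × ℤ), IsLatticePathFrom P (a, b) (c, d) ∧
        (∀ i, StaysSE P (x i, y i)) ∧ k = (NETurns P).length}
      (c - b - sSup (insert (a - b) (insert (c - d) (Set.range fun i => x i - y i)))) := by
  set S : Set ℤ := insert (a - b) (insert (c - d) (Set.range fun i => x i - y i)) with hS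
  have hSne : S.Nonempty := ⟨a - b, Set.mem_insert _ _⟩
  have hSfin : S.Finite := ((Set.finite_range _).insert _).insert _
  have hbdd : BddAbove S := hSfin.bddAbove
  set M := sSup S with hM
  have hMmem : M ∈ S := hSne.csSup_mem hSfin
  have hab : a - b ≤ M := le_csSup hbdd (Set.mem_insert _ _)
  have hcd : c - d ≤ M := le_csSup hbdd (Set.mem_insert_of_mem _ (Set.mem_insert _ _))
  have hxy : ∀ i, x i - y i ≤ M := fun i =>
    le_csSup hbdd (Set.mem_insert_of_mem _ (Set.mem_insert_of_mem _ ⟨i, rfl⟩))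
  simp only [hS, Set.mem_insert_iff, Set.mem_range] at hMmem
  have hMcb : M ≤ c - b := by
    rcases hMmem with h | h | ⟨i, hi⟩
    · omega
    · omega
    · have h1 := hx i
      have h2 := hy i
      omega
  constructor
  · -- membership: the explicit extremal path
    set e := (M - (a - b)).toNat with hedef
    set k := (c - b - M).toNat with hkdef
    set f := (d - c + M).toNat with hfdef
    have he : (e : ℤ) = M - (a - b) := Int.toNat_of_nonneg (by omega)
    have hk : (k : ℤ) = c - b - M := Int.toNat_of_nonneg (by omega)
    have hf : (f : ℤ) = d - c + M := Int.toNat_of_nonneg (by omega)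
    refine ⟨seg (a, b) (List.replicate e true ++ (zig k ++ List.replicate f false)),
      ⟨seg_chain _ _, seg_head _ _, ?_⟩, ?_, ?_⟩
    · rw [seg_getLast, endpt_append, endpt_append, endpt_replicate_true, endpt_zig,
        endpt_replicate_false]
      simp only [Option.some.injEq, Prod.ext_iff]
      constructor <;> omega
    · -- StaysSE
      intro i p hp
      have hxi := hx i
      have hyi := hy i
      have hxyi := hxy i
      rw [seg_append] at hp
      rcases List.mem_append.1 hp with hp | hp
      · have := mem_seg_replicate_true (a, b) p e (List.dropLast_subset _ hp)
        right
        simp only at this ⊢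
        omega
      · rw [endpt_replicate_true, seg_append] at hp
        rcases List.mem_append.1 hp with hp | hp
        · have := mem_seg_zig _ p k (List.dropLast_subset _ hp)
          simp only at this
          by_cases hc' : x i ≤ p.1
          · left; exact hc'
          · right
            simp only
            omega
        · rw [endpt_zig] at hp
          have := mem_seg_replicate_false _ p f hp
          left
          simp only at this ⊢
          omega
    · rw [NETurns_seg, countNE_replicate_true_append, countNE_zig_append,
        countNE_replicate_false]
      omega
  · -- upper bound
    rintro k' ⟨P, ⟨hchain, hhead, hlast⟩, hSE, rfl⟩
    obtain ⟨b1, b2, b3⟩ := main_bound a b c d P hchain hhead hlast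
    rcases hMmem with h | h | ⟨i, hi⟩
    · omega
    · omega
    · have hxi := hx i
      have hyi := hy i
      have hb3 := b3 (x i) (y i) hyi.1 hxi.2 (fun p hp => hSE i p hp)
      omega
end
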